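/- arXiv:1205.2459 — 3 statements merged into one kernel-verified Lean document; each statement's English description precedes it below -/
import Mathlib

section
/- Let f : ℝ → ℝ be C¹ with |f(s)| ≤ C(1+|s|)^p and |f'(s)| ≤ C(1+|s|)^{p−1}, and let f̃(s) = tanh³(s)·|s|^p. Then there exists C' > 0 such that for all u, v ∈ ℝ, |f(v) − f(u)| ≤ C'·|v − u| + C'·|f̃(v) − f̃(u)|. -/
lemma my_tanh_hasDerivAt (x : ℝ) : HasDerivAt Real.tanh (1 / Real.cosh x ^ 2) x := by
  have h := (Real.hasDerivAt_sinh x).div (Real.hasDerivAt_cosh x) (Real.cosh_pos x).ne'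
  have heq : Real.tanh = fun y => Real.sinh y / Real.cosh y :=
    funext fun y => Real.tanh_eq_sinh_div_cosh y
  rw [heq]
  refine h.congr_deriv ?_
  have key := Real.cosh_sq_sub_sinh_sq x
  field_simp
  nlinarith [key]

lemma my_tanh_strictMono : StrictMono Real.tanh := by
  apply strictMono_of_deriv_pos
  intro x
  rw [(my_tanh_hasDerivAt x).deriv]
  positivity

lemma my_abs_tanh (x : ℝ) : |Real.tanh x| = Real.tanh |x| := by
  rcases le_or_gt 0 x with h | h
  · rw [abs_of_nonneg h, abs_of_nonneg]
    have := my_tanh_strictMono.monotone h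
    simpa [Real.tanh_zero] using this
  · rw [abs_of_neg h, abs_of_neg, Real.tanh_neg]
    have := my_tanh_strictMono h
    simpa [Real.tanh_zero] using this

lemma my_tanh_one_pos : 0 < Real.tanh 1 := by
  have := my_tanh_strictMono (show (0:ℝ) < 1 by norm_num)
  simpa [Real.tanh_zero] using this

noncomputable def Gfun (p : ℝ) (s : ℝ) : ℝ :=
  3 * Real.tanh s ^ 2 * (1 / Real.cosh s ^ 2) * |s| ^ p
    + p * |Real.tanh s| ^ 3 * |s| ^ (p - 1)

lemma Gfun_nonneg (p : ℝ) (hp : 1 ≤ p) (s : ℝ) : 0 ≤ Gfun p s := by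
  unfold Gfun
  have h1 : (0:ℝ) ≤ |s| ^ p := Real.rpow_nonneg (abs_nonneg s) p
  have h2 : (0:ℝ) ≤ |s| ^ (p - 1) := Real.rpow_nonneg (abs_nonneg s) (p - 1)
  have hp0 : (0:ℝ) < p := lt_of_lt_of_le one_pos hp
  positivity

lemma hasDerivAt_g (p : ℝ) (hp : 1 ≤ p) (s : ℝ) :
    HasDerivAt (fun t => Real.tanh t ^ 3 * |t| ^ p) (Gfun p s) s := by
  have hp0 : (0:ℝ) < p := lt_of_lt_of_le one_pos hp
  rcases eq_or_ne s 0 with rfl | hs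
  · -- derivative at 0 is 0
    have hG0 : Gfun p 0 = 0 := by
      simp [Gfun, Real.tanh_zero, Real.zero_rpow hp0.ne']
    rw [hG0, hasDerivAt_iff_isLittleO]
    have hsimp : (fun t => Real.tanh t ^ 3 * |t| ^ p - Real.tanh 0 ^ 3 * |(0:ℝ)| ^ p
        - (t - 0) • (0:ℝ)) = fun t => Real.tanh t ^ 3 * |t| ^ p := by
      funext t
      simp [Real.tanh_zero, Real.zero_rpow hp0.ne']
    rw [hsimp, Asymptotics.isLittleO_iff]
    intro c hc
    have hcont : ContinuousAt (fun t : ℝ => Real.tanh t ^ 3) 0 :=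
      ((my_tanh_hasDerivAt 0).continuousAt).pow 3
    have h0 : (fun t : ℝ => Real.tanh t ^ 3) 0 = 0 := by simp [Real.tanh_zero]
    have h1 : ∀ᶠ t : ℝ in nhds 0, |Real.tanh t ^ 3| < c := by
      have h0' : Filter.Tendsto (fun t : ℝ => Real.tanh t ^ 3) (nhds 0) (nhds 0) := by
        simpa [Real.tanh_zero] using hcont.tendsto
      have := Metric.tendsto_nhds.mp h0' c hc
      filter_upwards [this] with t ht
      simpa [Real.dist_eq] using ht
    have h2 : ∀ᶠ t : ℝ in nhds 0, |t| < 1 := by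
      filter_upwards [Metric.ball_mem_nhds (0:ℝ) one_pos] with t ht
      simpa [Real.dist_eq] using ht
    filter_upwards [h1, h2] with t ht1 ht2
    have habs : ‖Real.tanh t ^ 3 * |t| ^ p‖ = |Real.tanh t ^ 3| * |t| ^ p := by
      rw [norm_mul, Real.norm_eq_abs, Real.norm_eq_abs,
        abs_of_nonneg (Real.rpow_nonneg (abs_nonneg t) p)]
    rw [habs]
    rcases eq_or_ne t 0 with rfl | ht0
    · simp [Real.zero_rpow hp0.ne']
    · have hpow : |t| ^ p ≤ |t| := by
        have := Real.rpow_le_rpow_of_exponent_ge (abs_pos.mpr ht0) ht2.le hp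
        simpa [Real.rpow_one] using this
      calc |Real.tanh t ^ 3| * |t| ^ p ≤ c * |t| := by
            apply mul_le_mul ht1.le hpow (Real.rpow_nonneg (abs_nonneg t) p) hc.le
        _ = c * ‖t - 0‖ := by rw [sub_zero, Real.norm_eq_abs]
  · -- s ≠ 0
    have h1 : HasDerivAt (fun t => Real.tanh t ^ 3)
        (3 * Real.tanh s ^ 2 * (1 / Real.cosh s ^ 2)) s := by
      have h := (my_tanh_hasDerivAt s).fun_pow 3
      exact h.congr_deriv (by norm_num)
    have ha : HasDerivAt (fun t : ℝ => |t|) (SignType.sign s : ℝ) s := hasDerivAt_abs hs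
    have hr : HasDerivAt (fun x : ℝ => x ^ p) (p * |s| ^ (p - 1)) |s| :=
      Real.hasDerivAt_rpow_const (Or.inl (abs_ne_zero.mpr hs))
    have h2 : HasDerivAt (fun t : ℝ => |t| ^ p)
        (p * |s| ^ (p - 1) * (SignType.sign s : ℝ)) s := hr.comp s ha
    have := h1.mul h2
    refine this.congr_deriv ?_
    unfold Gfun
    have hsign : Real.tanh s ^ 3 * (SignType.sign s : ℝ) = |Real.tanh s| ^ 3 := by
      rcases lt_or_gt_of_ne hs with h | h
      · have ht : Real.tanh s < 0 := by
          have := my_tanh_strictMono h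
          simpa [Real.tanh_zero] using this
        rw [abs_of_neg ht]
        have hs1 : (SignType.sign s : ℝ) = -1 := by simp [sign_neg h]
        rw [hs1]; ring
      · have ht : 0 < Real.tanh s := by
          have := my_tanh_strictMono h
          simpa [Real.tanh_zero] using this
        rw [abs_of_pos ht]
        have hs1 : (SignType.sign s : ℝ) = 1 := by simp [sign_pos h]
        rw [hs1]; ring
    rw [← hsign]
    ring

lemma Gfun_continuous (p : ℝ) (hp : 1 ≤ p) : Continuous (Gfun p) := by
  have hconttanh : Continuous Real.tanh :=
    continuous_iff_continuousAt.mpr fun x => (my_tanh_hasDerivAt x).continuousAt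
  unfold Gfun
  apply Continuous.add
  · apply Continuous.mul
    · apply Continuous.mul
      · exact continuous_const.mul (hconttanh.pow 2)
      · exact continuous_const.div (Real.continuous_cosh.pow 2) fun x => by positivity
    · exact continuous_abs.rpow_const fun x => Or.inr (by linarith)
  · exact (continuous_const.mul ((hconttanh.abs).pow 3)).mul
      (continuous_abs.rpow_const fun x => Or.inr (by linarith))

theorem stmt_4 (p C : ℝ) (hp : 1 ≤ p) (hC : 0 < C)
    (f : ℝ → ℝ) (hf : ContDiff ℝ 1 f)
    (hgrowth : ∀ s, |f s| ≤ C * (1 + |s|) ^ p)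
    (hgrowth' : ∀ s, |deriv f s| ≤ C * (1 + |s|) ^ (p - 1))
    (ftilde : ℝ → ℝ) (hftilde : ∀ s, ftilde s = (Real.tanh s) ^ 3 * |s| ^ p) :
    ∃ C' > (0:ℝ), ∀ u v : ℝ,
      |f v - f u| ≤ C' * |v - u| + C' * |ftilde v - ftilde u| := by
  have hp0 : (0:ℝ) < p := lt_of_lt_of_le one_pos hp
  set g : ℝ → ℝ := fun s => Real.tanh s ^ 3 * |s| ^ p with hgdef
  have hgder : ∀ s, HasDerivAt g (Gfun p s) s := hasDerivAt_g p hp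
  have hGnn := Gfun_nonneg p hp
  have hGcont := Gfun_continuous p hp
  have hgmono : Monotone g :=
    monotone_of_deriv_nonneg (fun x => (hgder x).differentiableAt)
      (fun x => by rw [(hgder x).deriv]; exact hGnn x)
  set A : ℝ := C * 2 ^ (p - 1) with hA
  have h2p : (0:ℝ) < (2:ℝ) ^ (p - 1) := Real.rpow_pos_of_pos two_pos _
  have hApos : 0 < A := mul_pos hC h2p
  have hden : 0 < p * Real.tanh 1 ^ 3 := mul_pos hp0 (pow_pos my_tanh_one_pos 3)
  set B : ℝ := A / (p * Real.tanh 1 ^ 3) with hB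
  have hBpos : 0 < B := div_pos hApos hden
  have hbound : ∀ s, |deriv f s| ≤ A + B * Gfun p s := by
    intro s
    refine (hgrowth' s).trans ?_
    rcases le_or_gt (|s|) 1 with h | h
    · have h1 : (1 + |s|) ^ (p - 1) ≤ (2:ℝ) ^ (p - 1) :=
        Real.rpow_le_rpow (by positivity) (by linarith) (by linarith)
      have h2 : 0 ≤ B * Gfun p s := mul_nonneg hBpos.le (hGnn s)
      nlinarith [mul_le_mul_of_nonneg_left h1 hC.le]
    · have h1 : (1 + |s|) ^ (p - 1) ≤ (2 * |s|) ^ (p - 1) :=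
        Real.rpow_le_rpow (by positivity) (by linarith) (by linarith)
      have h2 : ((2:ℝ) * |s|) ^ (p - 1) = (2:ℝ) ^ (p - 1) * |s| ^ (p - 1) :=
        Real.mul_rpow (by norm_num) (abs_nonneg s)
      have htanh : Real.tanh 1 ≤ |Real.tanh s| := by
        rw [my_abs_tanh]
        exact my_tanh_strictMono.monotone h.le
      have hGlow : p * Real.tanh 1 ^ 3 * |s| ^ (p - 1) ≤ Gfun p s := by
        unfold Gfun
        have t1 : (0:ℝ) ≤ 3 * Real.tanh s ^ 2 * (1 / Real.cosh s ^ 2) * |s| ^ p := by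
          have : (0:ℝ) ≤ |s| ^ p := Real.rpow_nonneg (abs_nonneg s) p
          positivity
        have t2 : p * Real.tanh 1 ^ 3 * |s| ^ (p - 1)
            ≤ p * |Real.tanh s| ^ 3 * |s| ^ (p - 1) := by
          have h3 : Real.tanh 1 ^ 3 ≤ |Real.tanh s| ^ 3 :=
            pow_le_pow_left₀ my_tanh_one_pos.le htanh 3
          have hrn : (0:ℝ) ≤ |s| ^ (p - 1) := Real.rpow_nonneg (abs_nonneg s) _
          exact mul_le_mul_of_nonneg_right (mul_le_mul_of_nonneg_left h3 hp0.le) hrn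
        linarith
      have hBG : A * |s| ^ (p - 1) ≤ B * Gfun p s := by
        have e : A * |s| ^ (p - 1) = B * (p * Real.tanh 1 ^ 3 * |s| ^ (p - 1)) := by
          rw [hB]
          field_simp [my_tanh_one_pos.ne']
        rw [e]
        exact mul_le_mul_of_nonneg_left hGlow hBpos.le
      calc C * (1 + |s|) ^ (p - 1) ≤ C * ((2:ℝ) ^ (p - 1) * |s| ^ (p - 1)) := by
            rw [← h2]; exact mul_le_mul_of_nonneg_left h1 hC.le
        _ = A * |s| ^ (p - 1) := by rw [hA]; ring
        _ ≤ B * Gfun p s := hBG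
        _ ≤ A + B * Gfun p s := by linarith
  have key : ∀ u v : ℝ, u ≤ v → |f v - f u| ≤ A * (v - u) + B * (g v - g u) := by
    intro u v huv
    have hfc : Continuous (deriv f) := hf.continuous_deriv le_rfl
    have hfint : IntervalIntegrable (deriv f) MeasureTheory.volume u v :=
      hfc.intervalIntegrable u v
    have hfd : ∀ x ∈ Set.uIcc u v, HasDerivAt f (deriv f x) x := fun x _ =>
      (hf.differentiable one_ne_zero x).hasDerivAt
    have hftc : ∫ x in u..v, deriv f x = f v - f u :=
      intervalIntegral.integral_eq_sub_of_hasDerivAt hfd hfint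
    have hGint : IntervalIntegrable (Gfun p) MeasureTheory.volume u v :=
      hGcont.intervalIntegrable u v
    have hGtc : ∫ x in u..v, Gfun p x = g v - g u :=
      intervalIntegral.integral_eq_sub_of_hasDerivAt (fun x _ => hgder x) hGint
    have h1 : |f v - f u| ≤ ∫ x in u..v, |deriv f x| := by
      rw [← hftc]; exact intervalIntegral.abs_integral_le_integral_abs huv
    have h2 : (∫ x in u..v, |deriv f x|) ≤ ∫ x in u..v, (A + B * Gfun p x) := by
      apply intervalIntegral.integral_mono_on huv (hfc.abs.intervalIntegrable u v)
        ((continuous_const.add (continuous_const.mul hGcont)).intervalIntegrable u v)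
      intro x _
      exact hbound x
    have h3 : (∫ x in u..v, (A + B * Gfun p x)) = A * (v - u) + B * (g v - g u) := by
      rw [intervalIntegral.integral_add (g := fun x => B * Gfun p x) intervalIntegrable_const
          ((continuous_const.mul hGcont).intervalIntegrable u v),
        intervalIntegral.integral_const, intervalIntegral.integral_const_mul, hGtc]
      simp [smul_eq_mul]
      ring
    linarith
  refine ⟨A + B, by positivity, fun u v => ?_⟩
  have hft : ∀ s, ftilde s = g s := fun s => hftilde s
  rcases le_total u v with huv | huv
  · have hk := key u v huv
    have hgm : g u ≤ g v := hgmono huv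
    have e1 : |v - u| = v - u := abs_of_nonneg (by linarith)
    have e2 : |ftilde v - ftilde u| = g v - g u := by
      rw [hft, hft]; exact abs_of_nonneg (by linarith)
    rw [e1, e2]
    nlinarith [sub_nonneg.mpr huv, sub_nonneg.mpr hgm]
  · have hk := key v u huv
    have hgm : g v ≤ g u := hgmono huv
    have e1 : |v - u| = u - v := by rw [abs_sub_comm]; exact abs_of_nonneg (by linarith)
    have e2 : |ftilde v - ftilde u| = g u - g v := by
      rw [hft, hft, abs_sub_comm]; exact abs_of_nonneg (by linarith)
    rw [abs_sub_comm, e1, e2]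
    nlinarith [sub_nonneg.mpr huv, sub_nonneg.mpr hgm]
end

section
/- The space 𝒞 of C¹ functions f : ℝ → ℝ satisfying f(0)=0, s·f(s) ≥ 0, and growth bounds |f(s)| ≤ C(1+|s|)^p, |f'(s)| ≤ C(1+|s|)^{p−1} for some C > 0 and p ∈ [1,5), endowed with the Whitney topology (neighborhoods N_{f,δ} = {g : ∀u, max(|f(u)−g(u)|, |f'(u)−g'(u)|) < δ(u)} for positive continuous δ), is a Baire space: any countable intersection of dense open subsets is dense. -/
/-- The class of `C¹` defocusing subcritical nonlinearities. -/
def GoodFun (f : ℝ → ℝ) : Prop :=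
  ContDiff ℝ 1 f ∧ f 0 = 0 ∧ (∀ s : ℝ, 0 ≤ s * f s) ∧
    ∃ C : ℝ, 0 < C ∧ ∃ p : ℝ, 1 ≤ p ∧ p < 5 ∧
      ∀ s : ℝ, |f s| ≤ C * (1 + |s|) ^ p ∧ |deriv f s| ≤ C * (1 + |s|) ^ (p - 1)

/-- Whitney neighbourhood basis sets on the class `GoodFun`. -/
def whitneyTopology : TopologicalSpace {f : ℝ → ℝ // GoodFun f} :=
  TopologicalSpace.generateFrom
    { S | ∃ (f : ℝ → ℝ), GoodFun f ∧ ∃ δ : ℝ → ℝ, Continuous δ ∧ (∀ u, 0 < δ u) ∧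
        S = { g : {f : ℝ → ℝ // GoodFun f} |
          ∀ u : ℝ, max |f u - g.1 u| |deriv f u - deriv g.1 u| < δ u } }

namespace WhitneyAux

open Set Filter Topology

abbrev X := {f : ℝ → ℝ // GoodFun f}

/-- pointwise C¹-distance -/
noncomputable def err (f g : ℝ → ℝ) (u : ℝ) : ℝ :=
  max |f u - g u| |deriv f u - deriv g u|

lemma err_nonneg (f g : ℝ → ℝ) (u : ℝ) : 0 ≤ err f g u :=
  le_trans (abs_nonneg _) (le_max_left _ _)

lemma err_self (f : ℝ → ℝ) (u : ℝ) : err f f u = 0 := by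
  simp [err]

lemma err_comm (f g : ℝ → ℝ) (u : ℝ) : err f g u = err g f u := by
  simp [err, abs_sub_comm]

lemma err_tri (f g h : ℝ → ℝ) (u : ℝ) : err f h u ≤ err f g u + err g h u := by
  unfold err
  rcases max_cases |f u - h u| |deriv f u - deriv h u| with ⟨h1, _⟩ | ⟨h1, _⟩ <;> rw [h1]
  · calc |f u - h u| ≤ |f u - g u| + |g u - h u| := abs_sub_le _ _ _
      _ ≤ _ := add_le_add (le_max_left _ _) (le_max_left _ _)
  · calc |deriv f u - deriv h u| ≤ |deriv f u - deriv g u| + |deriv g u - deriv h u| :=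
        abs_sub_le _ _ _
      _ ≤ _ := add_le_add (le_max_right _ _) (le_max_right _ _)

lemma gcont {f : ℝ → ℝ} (hf : GoodFun f) : Continuous f :=
  hf.1.continuous

lemma gcontd {f : ℝ → ℝ} (hf : GoodFun f) : Continuous (deriv f) :=
  hf.1.continuous_deriv le_rfl

lemma err_cont {f g : ℝ → ℝ} (hf : GoodFun f) (hg : GoodFun g) : Continuous (err f g) :=
  (((gcont hf).sub (gcont hg)).abs).max (((gcontd hf).sub (gcontd hg)).abs)

/-- Whitney basic set -/
def wB (f : ℝ → ℝ) (δ : ℝ → ℝ) : Set X :=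
  { g : X | ∀ u : ℝ, err f (g.1) u < δ u }

/-- the generating family -/
def wS : Set (Set X) :=
  { S | ∃ (f : ℝ → ℝ), GoodFun f ∧ ∃ δ : ℝ → ℝ, Continuous δ ∧ (∀ u, 0 < δ u) ∧ S = wB f δ }

lemma whitney_eq : whitneyTopology = TopologicalSpace.generateFrom wS := rfl

lemma self_mem_wB (g : X) {δ : ℝ → ℝ} (hδ : ∀ u, 0 < δ u) : g ∈ wB g.1 δ := by
  intro u
  rw [err_self]
  exact hδ u

lemma wB_mono {f δ δ'} (h : ∀ u, δ u ≤ δ' u) : wB f δ ⊆ wB f δ' :=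
  fun g hg u => lt_of_lt_of_le (hg u) (h u)

/-- recentering a basic set at one of its points -/
lemma recenter {t : Set X} (ht : t ∈ wS) {g : X} (hg : g ∈ t) :
    ∃ δ : ℝ → ℝ, Continuous δ ∧ (∀ u, 0 < δ u) ∧ wB g.1 δ ⊆ t := by
  obtain ⟨f, hf, η, hηc, hηp, rfl⟩ := ht
  refine ⟨fun u => η u - err f g.1 u, hηc.sub (err_cont hf g.2), fun u => sub_pos.2 (hg u), ?_⟩
  intro h hh u
  have hhu : err g.1 h.1 u < η u - err f g.1 u := hh u
  calc err f h.1 u ≤ err f g.1 u + err g.1 h.1 u := err_tri _ _ _ _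
    _ < err f g.1 u + (η u - err f g.1 u) := by linarith
    _ = η u := by ring

lemma wB_mem_wS {f : ℝ → ℝ} (hf : GoodFun f) {δ : ℝ → ℝ} (hc : Continuous δ)
    (hp : ∀ u, 0 < δ u) : wB f δ ∈ wS :=
  ⟨f, hf, δ, hc, hp, rfl⟩

section
attribute [local instance] whitneyTopology

lemma basis : TopologicalSpace.IsTopologicalBasis wS := by
  refine ⟨?_, ?_, rfl⟩
  · rintro t₁ h₁ t₂ h₂ x ⟨hx₁, hx₂⟩
    obtain ⟨δ₁, hc₁, hp₁, hs₁⟩ := recenter h₁ hx₁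
    obtain ⟨δ₂, hc₂, hp₂, hs₂⟩ := recenter h₂ hx₂
    refine ⟨wB x.1 (fun u => min (δ₁ u) (δ₂ u)),
      wB_mem_wS x.2 (hc₁.min hc₂) (fun u => lt_min (hp₁ u) (hp₂ u)),
      self_mem_wB x (fun u => lt_min (hp₁ u) (hp₂ u)), ?_⟩
    exact subset_inter
      ((wB_mono (fun u => min_le_left _ _)).trans hs₁)
      ((wB_mono (fun u => min_le_right _ _)).trans hs₂)
  · refine eq_univ_of_forall fun x => ?_
    exact ⟨wB x.1 (fun _ => 1), wB_mem_wS x.2 continuous_const (fun _ => one_pos),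
      self_mem_wB x (fun _ => one_pos)⟩

lemma wB_isOpen {f : ℝ → ℝ} (hf : GoodFun f) {δ : ℝ → ℝ} (hc : Continuous δ)
    (hp : ∀ u, 0 < δ u) : IsOpen (wB f δ) :=
  basis.isOpen (wB_mem_wS hf hc hp)

/-- the state of the inductive construction -/
structure St where
  f : X
  δ : ℝ → ℝ
  cont : Continuous δ
  pos : ∀ u, 0 < δ u

lemma exists_next (W : Set X) (hWo : IsOpen W) (hWd : Dense W) (s : St) (b : ℝ) (hb : 0 < b) :
    ∃ t : St, (∀ u, err s.f.1 t.f.1 u < s.δ u) ∧ (∀ u, t.δ u ≤ s.δ u / 2) ∧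
      (∀ u, t.δ u ≤ b) ∧
      ∀ h : X, (∀ u, err t.f.1 h.1 u ≤ 2 * t.δ u) → h ∈ W ∩ wB s.f.1 s.δ := by
  have hBo : IsOpen (wB s.f.1 s.δ) := wB_isOpen s.f.2 s.cont s.pos
  obtain ⟨g, hgW, hgB⟩ := hWd.exists_mem_open hBo ⟨s.f, self_mem_wB s.f s.pos⟩
  have hopen : IsOpen (W ∩ wB s.f.1 s.δ) := hWo.inter hBo
  have hg2 : g ∈ W ∩ wB s.f.1 s.δ := ⟨hgW, hgB⟩
  obtain ⟨t', ht'S, hgt', ht'sub⟩ := basis.exists_subset_of_mem_open hg2 hopen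
  obtain ⟨η, hηc, hηp, hηsub⟩ := recenter ht'S hgt'
  refine ⟨⟨g, fun u => min (min (η u / 3) (s.δ u / 2)) b,
      ((hηc.div_const 3).min (s.cont.div_const 2)).min continuous_const,
      fun u => lt_min (lt_min (by linarith [hηp u]) (by linarith [s.pos u])) hb⟩,
      hgB, ?_, ?_, ?_⟩
  · intro u; exact (min_le_left _ _).trans (min_le_right _ _)
  · intro u; exact min_le_right _ _
  · intro h hh
    refine ht'sub (hηsub ?_)
    intro u
    have h1 : min (min (η u / 3) (s.δ u / 2)) b ≤ η u / 3 :=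
      (min_le_left _ _).trans (min_le_left _ _)
    have := hh u
    have := hηp u
    linarith

/-- the recursive sequence of shrinking Whitney balls -/
noncomputable def seq (U : ℕ → Set X) (hUo : ∀ n, IsOpen (U n)) (hUd : ∀ n, Dense (U n))
    (s0 : St) : ℕ → St
  | 0 => s0
  | n + 1 => Classical.choose
      (exists_next (U n) (hUo n) (hUd n) (seq U hUo hUd s0 n) ((1 / 2 : ℝ) ^ (n + 1))
        (by positivity))

lemma seq_spec (U : ℕ → Set X) (hUo : ∀ n, IsOpen (U n)) (hUd : ∀ n, Dense (U n))
    (s0 : St) (n : ℕ) :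
    (∀ u, err (seq U hUo hUd s0 n).f.1 (seq U hUo hUd s0 (n + 1)).f.1 u
        < (seq U hUo hUd s0 n).δ u) ∧
    (∀ u, (seq U hUo hUd s0 (n + 1)).δ u ≤ (seq U hUo hUd s0 n).δ u / 2) ∧
    (∀ u, (seq U hUo hUd s0 (n + 1)).δ u ≤ (1 / 2 : ℝ) ^ (n + 1)) ∧
    ∀ h : X, (∀ u, err (seq U hUo hUd s0 (n + 1)).f.1 h.1 u
        ≤ 2 * (seq U hUo hUd s0 (n + 1)).δ u) →
      h ∈ U n ∩ wB (seq U hUo hUd s0 n).f.1 (seq U hUo hUd s0 n).δ :=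
  Classical.choose_spec
    (exists_next (U n) (hUo n) (hUd n) (seq U hUo hUd s0 n) ((1 / 2 : ℝ) ^ (n + 1))
      (by positivity))

end

end WhitneyAux

open WhitneyAux Set Filter Topology in
theorem stmt_15 : @BaireSpace {f : ℝ → ℝ // GoodFun f} whitneyTopology := by
  letI : TopologicalSpace X := whitneyTopology
  constructor
  intro U hUo hUd
  rw [dense_iff_inter_open]
  rintro V hV ⟨x, hx⟩
  -- initial basic set inside V
  obtain ⟨t, htS, hxt, htV⟩ := basis.exists_subset_of_mem_open hx hV
  obtain ⟨δ', hδ'c, hδ'p, hδ'sub⟩ := recenter htS hxt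
  set s0 : St := ⟨x, fun u => min (δ' u) 1, hδ'c.min continuous_const,
    fun u => lt_min (hδ'p u) one_pos⟩ with hs0
  set q : ℕ → St := seq U hUo hUd s0 with hq
  have spec := seq_spec U hUo hUd s0
  -- global smallness of the radii
  have hδsmall : ∀ n u, (q n).δ u ≤ (1 / 2 : ℝ) ^ n := by
    intro n u
    cases n with
    | zero => exact min_le_right (δ' u) 1
    | succ n => exact (spec n).2.2.1 u
  -- telescoping estimate
  have key : ∀ n m, n ≤ m → ∀ u,
      err (q n).f.1 (q m).f.1 u ≤ 2 * (q n).δ u - 2 * (q m).δ u := by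
    intro n m hnm
    induction m with
    | zero =>
      interval_cases n
      intro u; rw [err_self]; ring_nf; exact le_refl _
    | succ m ih =>
      intro u
      rcases Nat.lt_or_ge n (m + 1) with h | h
      · have hn : n ≤ m := Nat.lt_succ_iff.mp h
        have h1 := ih hn u
        have h2 := (spec m).1 u
        have h3 := (spec m).2.1 u
        calc err (q n).f.1 (q (m + 1)).f.1 u
            ≤ err (q n).f.1 (q m).f.1 u + err (q m).f.1 (q (m + 1)).f.1 u := err_tri _ _ _ _
          _ ≤ (2 * (q n).δ u - 2 * (q m).δ u) + (q m).δ u := by linarith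
          _ ≤ 2 * (q n).δ u - 2 * (q (m + 1)).δ u := by linarith
      · have : n = m + 1 := le_antisymm hnm h
        subst this
        rw [err_self]; ring_nf; exact le_refl _
  -- pointwise convergence of the functions and their derivatives
  -- pointwise convergence of the functions and their derivatives
  have cauchyAux : ∀ (φ : ℕ → ℝ → ℝ), (∀ n u, |φ n u - φ (n+1) u| ≤ err (q n).f.1 (q (n+1)).f.1 u) →
      ∀ u : ℝ, ∃ L : ℝ, Tendsto (fun n => φ n u) atTop (𝓝 L) := by
    intro φ hφ u
    refine cauchySeq_tendsto_of_complete (cauchySeq_of_le_geometric (1 / 2) 1 (by norm_num) ?_)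
    intro n
    have h1 := (spec n).1 u
    have h2 := hδsmall n u
    have h3 := hφ n u
    rw [Real.dist_eq, one_mul]
    linarith
  obtain ⟨F, hF⟩ := Classical.axiomOfChoice
    (cauchyAux (fun n => (q n).f.1) (fun n u => le_max_left _ _))
  obtain ⟨G, hG⟩ := Classical.axiomOfChoice
    (cauchyAux (fun n => deriv (q n).f.1) (fun n u => le_max_right _ _))
  -- quantitative bounds on the limit
  have hFb : ∀ n u, |(q n).f.1 u - F u| ≤ 2 * (q n).δ u := by
    intro n u
    refine le_of_tendsto (((hF u).const_sub _).abs) ?_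
    filter_upwards [eventually_ge_atTop n] with m hm
    have h1 := key n m hm u
    have h2 : |(q n).f.1 u - (q m).f.1 u| ≤ err (q n).f.1 (q m).f.1 u := le_max_left _ _
    have h3 := ((q m).pos u).le
    linarith
  have hGb : ∀ n u, |deriv (q n).f.1 u - G u| ≤ 2 * (q n).δ u := by
    intro n u
    refine le_of_tendsto (((hG u).const_sub _).abs) ?_
    filter_upwards [eventually_ge_atTop n] with m hm
    have h1 := key n m hm u
    have h2 : |deriv (q n).f.1 u - deriv (q m).f.1 u| ≤ err (q n).f.1 (q m).f.1 u :=
      le_max_right _ _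
    have h3 := ((q m).pos u).le
    linarith
  -- uniform convergence of the derivatives
  have hunif : TendstoUniformly (fun n u => deriv (q n).f.1 u) G atTop := by
    rw [Metric.tendstoUniformly_iff]
    intro ε hε
    obtain ⟨N, hN⟩ := exists_pow_lt_of_lt_one (show (0:ℝ) < ε / 2 by linarith)
      (show (1/2 : ℝ) < 1 by norm_num)
    filter_upwards [eventually_ge_atTop N] with n hn u
    have h1 := hGb n u
    have h2 := hδsmall n u
    have h3 : ((1:ℝ)/2) ^ n ≤ (1/2 : ℝ) ^ N :=
      pow_le_pow_of_le_one (by norm_num) (by norm_num) hn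
    rw [Real.dist_eq, abs_sub_comm]
    linarith
  -- the limit has derivative G
  have hDF : ∀ u, HasDerivAt F (G u) u := by
    refine hasDerivAt_of_tendstoUniformly hunif (Eventually.of_forall fun n u => ?_) hF
    exact (((q n).f.2.1.differentiable one_ne_zero) u).hasDerivAt
  have hderivF : deriv F = G := funext fun u => (hDF u).deriv
  -- the limit is a good function
  have hGcont : Continuous G :=
    hunif.continuous (Eventually.of_forall (fun n => gcontd (q n).f.2)).frequently
  have hgood : GoodFun F := by
    refine ⟨contDiff_one_iff_deriv.mpr ⟨fun u => (hDF u).differentiableAt,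
        hderivF ▸ hGcont⟩, ?_, ?_, ?_⟩
    · have h0 : Tendsto (fun n => (q n).f.1 0) atTop (𝓝 (0:ℝ)) := by
        have : (fun n => (q n).f.1 0) = fun _ => (0:ℝ) :=
          funext fun n => (q n).f.2.2.1
        rw [this]; exact tendsto_const_nhds
      exact tendsto_nhds_unique (hF 0) h0
    · intro s
      refine ge_of_tendsto ((hF s).const_mul s) ?_
      exact Eventually.of_forall fun n => (q n).f.2.2.2.1 s
    · obtain ⟨C, hC, p, hp1, hp5, hCp⟩ := (q 0).f.2.2.2.2
      refine ⟨C + 2, by linarith, p, hp1, hp5, fun s => ?_⟩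
      have hd0 : (q 0).δ s ≤ 1 := min_le_right (δ' s) 1
      have h1 := hFb 0 s
      have h2 := hGb 0 s
      have hb1 := (hCp s).1
      have hb2 := (hCp s).2
      have hpow1 : (1:ℝ) ≤ (1 + |s|) ^ p :=
        Real.one_le_rpow (by linarith [abs_nonneg s]) (by linarith)
      have hpow2 : (1:ℝ) ≤ (1 + |s|) ^ (p - 1) :=
        Real.one_le_rpow (by linarith [abs_nonneg s]) (by linarith)
      have ha1 : |F s| - |(q 0).f.1 s| ≤ |(q 0).f.1 s - F s| := by
        rw [abs_sub_comm]; exact abs_sub_abs_le_abs_sub _ _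
      have ha2 : |G s| - |deriv (q 0).f.1 s| ≤ |deriv (q 0).f.1 s - G s| := by
        rw [abs_sub_comm]; exact abs_sub_abs_le_abs_sub _ _
      rw [hderivF]
      constructor
      · nlinarith
      · nlinarith
  set Fx : X := ⟨F, hgood⟩ with hFx
  -- Fx belongs to every U n and to the initial ball
  have hmem : ∀ n, Fx ∈ U n ∩ wB (q n).f.1 (q n).δ := by
    intro n
    refine (spec n).2.2.2 Fx ?_
    intro u
    refine max_le ?_ ?_
    · exact hFb (n + 1) u
    · show |deriv (q (n+1)).f.1 u - deriv Fx.1 u| ≤ _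
      rw [hFx]
      simp only [hderivF]
      exact hGb (n + 1) u
  refine ⟨Fx, ?_, ?_⟩
  · refine htV (hδ'sub ?_)
    have h0 : Fx ∈ wB (q 0).f.1 (q 0).δ := (hmem 0).2
    exact wB_mono (fun u => min_le_left (δ' u) 1) h0
  · exact mem_iInter.mpr fun n => (hmem n).1
end

section
/- Given a ≥ 0 and f₀ : ℝ → ℝ continuous with f₀(0) = 0 and s·f₀(s) ≥ 0, for every ε > 0 there exists a real-analytic function f : [−a,a] → ℝ with f(0) = 0, s·f(s) ≥ 0 on [−a,a], and sup_{[−a,a]} |f − f₀| ≤ ε. (Density of analytic defocusing nonlinearities.) -/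
open Set in
theorem stmt_18 (a : ℝ) (ha : 0 < a) (f₀ : ℝ → ℝ) (hcont : Continuous f₀)
    (hf0 : f₀ 0 = 0) (hsign : ∀ s : ℝ, 0 ≤ s * f₀ s) (ε : ℝ) (hε : 0 < ε) :
    ∃ f : ℝ → ℝ, AnalyticOn ℝ f (Icc (-a) a) ∧ f 0 = 0 ∧
      (∀ s ∈ Icc (-a) a, 0 ≤ s * f s) ∧
      ∀ s ∈ Icc (-a) a, |f s - f₀ s| ≤ ε := by
  -- choose δ from continuity at 0
  obtain ⟨δ, hδ0, hδ⟩ : ∃ δ > 0, ∀ s : ℝ, |s| ≤ δ → |f₀ s| ≤ ε / 4 := by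
    have := Metric.continuous_iff.mp hcont 0 (ε/4) (by linarith)
    obtain ⟨d, hd0, hd⟩ := this
    refine ⟨d/2, by linarith, fun s hs => ?_⟩
    have := hd s (by simp [Real.dist_eq]; linarith [abs_nonneg s])
    simpa [Real.dist_eq, hf0, abs_le] using le_of_lt this
  -- bound M on |f₀|
  obtain ⟨M, hM⟩ : ∃ M, ∀ s ∈ Icc (-a) a, |f₀ s| ≤ M := by
    obtain ⟨M, hM⟩ := (isCompact_Icc (a := -a) (b := a)).exists_bound_of_continuousOn
      hcont.continuousOn
    exact ⟨M, fun s hs => by simpa using hM s hs⟩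
  have hM0 : 0 ≤ M := le_trans (abs_nonneg _) (hM 0 (by constructor <;> linarith))
  -- choose τ
  set τ : ℝ := δ^2 * ε / (4 * (M + 1)) with hτdef
  have hτ0 : 0 < τ := by positivity
  -- ψ
  set ψ : ℝ → ℝ := fun s => s * f₀ s / (s^2 + τ) with hψdef
  have hψcont : ContinuousOn ψ (Icc (-a) a) := by
    apply ContinuousOn.div
    · exact (continuous_id.mul hcont).continuousOn
    · fun_prop
    · intro s _; positivity
  have hψ0 : ∀ s, 0 ≤ ψ s := fun s => div_nonneg (hsign s) (by positivity)
  -- Weierstrass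
  set η : ℝ := ε / (8 * (a + 1)) with hηdef
  have hη0 : 0 < η := by positivity
  obtain ⟨p, hp⟩ := exists_polynomial_near_of_continuousOn (-a) a ψ hψcont η hη0
  refine ⟨fun s => s * (p.eval s + η), ?_, by simp, ?_, ?_⟩
  · have hA : AnalyticOnNhd ℝ (fun s : ℝ => s * (p.eval s + η)) Set.univ :=
      analyticOnNhd_id.mul ((AnalyticOnNhd.eval_polynomial p).add analyticOnNhd_const)
    exact (hA.mono (Set.subset_univ _)).analyticOn
  · intro s hs
    have h1 : ψ s - η ≤ p.eval s := by
      have := hp s hs; rw [abs_lt] at this; linarith [this.1]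
    have h2 : 0 ≤ p.eval s + η := by linarith [hψ0 s]
    have : s * (s * (p.eval s + η)) = s^2 * (p.eval s + η) := by ring
    rw [this]; positivity
  · intro s hs
    have hsle : |s| ≤ a := abs_le.mpr ⟨hs.1, hs.2⟩
    have hd0 : (0:ℝ) < s^2 + τ := by positivity
    have key : s * ψ s - f₀ s = -(f₀ s * (τ / (s^2 + τ))) := by
      rw [hψdef]; field_simp; ring
    have h2 : |s * ψ s - f₀ s| ≤ ε / 2 := by
      rw [key, abs_neg, abs_mul]
      have hτpos : |τ / (s^2 + τ)| = τ / (s^2 + τ) := abs_of_nonneg (by positivity)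
      rw [hτpos]
      rcases le_or_gt |s| δ with h | h
      · have := hδ s h
        have hfrac : τ / (s^2 + τ) ≤ 1 := by
          rw [div_le_one hd0]; nlinarith [sq_nonneg s]
        calc |f₀ s| * (τ / (s^2 + τ)) ≤ (ε/4) * 1 :=
              mul_le_mul this hfrac (by positivity) (by linarith)
          _ ≤ ε / 2 := by linarith
      · have hs2 : δ^2 ≤ s^2 := by nlinarith [abs_nonneg s, sq_abs s]
        have hfrac : τ / (s^2 + τ) ≤ τ / δ^2 := by
          apply div_le_div_of_nonneg_left hτ0.le (by positivity)
          nlinarith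
        have hτδ : τ / δ^2 = ε / (4 * (M+1)) := by
          rw [hτdef]; field_simp
        calc |f₀ s| * (τ / (s^2 + τ)) ≤ M * (ε / (4 * (M+1))) := by
              apply mul_le_mul (hM s hs) (by rw [← hτδ]; exact hfrac)
                (by positivity) hM0
          _ ≤ ε / 2 := by
              rw [mul_comm, div_mul_eq_mul_div, div_le_div_iff₀ (by positivity) (by norm_num)]
              nlinarith [mul_nonneg hε.le hM0]
    have h1 : |s * (p.eval s + η) - s * ψ s| ≤ ε / 4 := by
      have : s * (p.eval s + η) - s * ψ s = s * (p.eval s - ψ s + η) := by ring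
      rw [this, abs_mul]
      have : |p.eval s - ψ s + η| ≤ 2 * η := by
        have := (hp s hs).le; rw [abs_le] at this ⊢; constructor <;> linarith [this.1, this.2]
      calc |s| * |p.eval s - ψ s + η| ≤ a * (2 * η) :=
            mul_le_mul hsle this (abs_nonneg _) (by linarith)
        _ ≤ ε / 4 := by
            rw [hηdef, show a * (2 * (ε / (8 * (a + 1)))) = a * ε / (4 * (a+1)) by
              field_simp; ring, div_le_div_iff₀ (by positivity) (by norm_num)]
            nlinarith [hε.le]
    calc |s * (p.eval s + η) - f₀ s|
        ≤ |s * (p.eval s + η) - s * ψ s| + |s * ψ s - f₀ s| := abs_sub_le _ _ _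
      _ ≤ ε / 4 + ε / 2 := add_le_add h1 h2
      _ ≤ ε := by linarith
end
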